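/- Let n > 1 be odd with l = v_2(n+1), so n = 2^{l+1}·m + 2^l − 1 for some m ≥ 0. Write the Collatz trajectory after l up-steps as c_l = 3^l·(2m) + (3^l − 1), and for 0 ≤ i ≤ k' (k' = v_2(c_l)) write c_{l+i} = c_l / 2^i = 3^l·p_i + q_i with 0 ≤ q_i < 3^l. Then q_i = a_{l,i} for all 0 ≤ i ≤ k', where a_{l,i} is defined by a_{l,0} = 3^l − 1 and a_{l,i+1} = a_{l,i}/2 if even, (a_{l,i} + 3^l)/2 if odd. -/

import Mathlib

/-- The halving-mod-`3^l` recurrence. -/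
def aSeq (l : ℕ) : ℕ → ℕ
  | 0 => 3 ^ l - 1
  | i + 1 => if aSeq l i % 2 = 0 then aSeq l i / 2 else (aSeq l i + 3 ^ l) / 2

lemma aSeq_lt (l i : ℕ) : aSeq l i < 3 ^ l := by
  have h3 : 1 ≤ 3 ^ l := Nat.one_le_pow l 3 (by norm_num)
  induction i with
  | zero => simp only [aSeq]; omega
  | succ i ih =>
    simp only [aSeq]
    split <;> omega

lemma two_mul_aSeq (l i : ℕ) : 2 * aSeq l (i + 1) ≡ aSeq l i [MOD 3 ^ l] := by
  have h3 : 3 ^ l % 2 = 1 := by simp [Nat.pow_mod]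
  show 2 * (if aSeq l i % 2 = 0 then aSeq l i / 2 else (aSeq l i + 3 ^ l) / 2) ≡ _ [MOD 3 ^ l]
  split
  · next h =>
    have : 2 * (aSeq l i / 2) = aSeq l i := by omega
    rw [this]
  · next h =>
    have h2 : 2 * ((aSeq l i + 3 ^ l) / 2) = aSeq l i + 3 ^ l := by omega
    rw [h2]
    exact (Nat.add_mod_right _ _ : (aSeq l i + 3 ^ l) % 3 ^ l = aSeq l i % 3 ^ l)

/-- For odd `n > 1` with `l = v₂(n+1)`, writing `n = 2^(l+1)·m + 2^l - 1`,
the apex is `c_l = 3^l·(2m) + (3^l - 1)`; for every `0 ≤ i ≤ k' = v₂(c_l)`, the residue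
modulo `3^l` of `c_l / 2^i` equals `a_{l,i}`. -/
theorem residues_along_down_steps (n l m : ℕ) (hodd : Odd n) (hn : 1 < n)
    (hl : l = padicValNat 2 (n + 1)) (hm : n = 2 ^ (l + 1) * m + 2 ^ l - 1) :
    ∀ i ≤ padicValNat 2 (3 ^ l * (2 * m) + (3 ^ l - 1)),
      ((3 ^ l * (2 * m) + (3 ^ l - 1)) / 2 ^ i) % 3 ^ l = aSeq l i := by
  have h3 : 1 ≤ 3 ^ l := Nat.one_le_pow l 3 (by norm_num)
  set c := 3 ^ l * (2 * m) + (3 ^ l - 1) with hc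
  intro i hi
  induction i with
  | zero =>
    simp only [pow_zero, Nat.div_one, hc, aSeq, Nat.mul_add_mod]
    exact Nat.mod_eq_of_lt (by omega)
  | succ i ih =>
    have key := ih (by omega)
    have hdvd : 2 ^ (i + 1) ∣ c :=
      dvd_trans (pow_dvd_pow 2 hi) pow_padicValNat_dvd
    obtain ⟨k, hk⟩ := hdvd
    rw [hk] at key ⊢
    have e1 : 2 ^ (i + 1) * k / 2 ^ (i + 1) = k :=
      Nat.mul_div_cancel_left k (Nat.pow_pos (by norm_num))
    have e2 : 2 ^ (i + 1) * k / 2 ^ i = 2 * k := by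
      rw [show 2 ^ (i + 1) * k = 2 ^ i * (2 * k) by ring,
        Nat.mul_div_cancel_left _ (Nat.pow_pos (by norm_num))]
    rw [e2] at key
    rw [e1]
    have hcop : Nat.Coprime 2 (3 ^ l) := Nat.Coprime.pow_right l (by decide)
    have hmeq : 2 * (k % 3 ^ l) ≡ 2 * aSeq l (i + 1) [MOD 3 ^ l] := by
      calc 2 * (k % 3 ^ l) ≡ 2 * k [MOD 3 ^ l] :=
            Nat.ModEq.mul_left 2 (Nat.mod_modEq k (3 ^ l))
        _ ≡ aSeq l i [MOD 3 ^ l] := by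
            unfold Nat.ModEq; rw [key]; exact (Nat.mod_eq_of_lt (aSeq_lt l i)).symm ▸ rfl
        _ ≡ 2 * aSeq l (i + 1) [MOD 3 ^ l] := (two_mul_aSeq l i).symm
    have hcancel : k % 3 ^ l ≡ aSeq l (i + 1) [MOD 3 ^ l] :=
      Nat.ModEq.cancel_left_of_coprime hcop.symm hmeq
    have := hcancel
    unfold Nat.ModEq at this
    rw [Nat.mod_mod_of_dvd _ dvd_rfl, Nat.mod_eq_of_lt (aSeq_lt l (i + 1))] at this
    exact this
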